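/- Let $r \ge 2$ and let $\zeta = e^{-2\pi i j / 2^r}$ for an odd integer $j$ with $1 \le j \le 2^r - 1$, and let $f(q) = 1$ for $2^{r-1}+1 \le q \le 2^r - 1$ and $f(q)=0$ otherwise (for $0 \le q \le 2^r-1$). Then $\sum_{q=1,\ q \text{ odd}}^{2^r - 1} (-1)^{f(q)} \zeta^q = \frac{-2i}{\sin(2\pi j / 2^r)}$, and $\sum_{q=1,\ q \text{ odd}}^{2^r-1} (-1)^{f(q)} (i^{-1}\zeta)^q = \frac{-2i}{\cos(2\pi j/2^r)}$. -/

import Mathlib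

open Real Finset

lemma odd_geom (M : ℕ) (z : ℂ) (hz : z ^ 2 - 1 ≠ 0) :
    ∑ i ∈ Finset.range (2 * M), (if i % 2 = 1 then z ^ i else 0)
      = z * ((z ^ 2) ^ M - 1) / (z ^ 2 - 1) := by
  induction M with
  | zero => simp
  | succ n ih =>
    have e1 : 2 * (n + 1) = (2 * n + 1) + 1 := by ring
    rw [e1, Finset.sum_range_succ, Finset.sum_range_succ, ih,
        if_neg (by omega : ¬ (2 * n) % 2 = 1), if_pos (by omega : (2 * n + 1) % 2 = 1)]
    have key : z ^ (2 * n + 1) = z * (z ^ 2) ^ n := by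
      rw [pow_succ, pow_mul]; ring
    rw [key]
    field_simp
    ring

lemma split_sum (M : ℕ) (hM : M % 2 = 0) (w : ℂ) :
    ∑ q ∈ Finset.range (M + M), (if q % 2 = 1 then (if M + 1 ≤ q then (-1 : ℂ) else 1) * w ^ q else 0)
      = (1 - w ^ M) * ∑ i ∈ Finset.range M, (if i % 2 = 1 then w ^ i else 0) := by
  rw [Finset.sum_range_add]
  have h1 : ∀ q ∈ Finset.range M,
      (if q % 2 = 1 then (if M + 1 ≤ q then (-1 : ℂ) else 1) * w ^ q else 0)
        = (if q % 2 = 1 then w ^ q else 0) := by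
    intro q hq
    simp only [Finset.mem_range] at hq
    by_cases h : q % 2 = 1
    · rw [if_pos h, if_pos h, if_neg (by omega), one_mul]
    · rw [if_neg h, if_neg h]
  have h2 : ∀ i ∈ Finset.range M,
      (if (M + i) % 2 = 1 then (if M + 1 ≤ M + i then (-1 : ℂ) else 1) * w ^ (M + i) else 0)
        = -w ^ M * (if i % 2 = 1 then w ^ i else 0) := by
    intro i _
    by_cases h : i % 2 = 1
    · rw [if_pos (by omega : (M + i) % 2 = 1), if_pos (by omega : M + 1 ≤ M + i), if_pos h,
        pow_add]
      ring
    · rw [if_neg (by omega), if_neg h, mul_zero]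
  rw [Finset.sum_congr rfl h1, Finset.sum_congr rfl h2, ← Finset.mul_sum]
  ring

lemma exp_ne_one (j k : ℕ) (hj : j % 2 = 1) (hk : 1 ≤ k) :
    Complex.exp (-2 * (π : ℂ) * Complex.I * j / 2 ^ k) ≠ 1 := by
  intro h
  rw [Complex.exp_eq_one_iff] at h
  obtain ⟨n, hn⟩ := h
  have hπ : (π : ℂ) ≠ 0 := by exact_mod_cast Real.pi_ne_zero
  have h2k : ((2 : ℂ)) ^ k ≠ 0 := pow_ne_zero _ two_ne_zero
  have h1 : ((-(j : ℂ)) / 2 ^ k) * (2 * π * Complex.I) = n * (2 * π * Complex.I) := by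
    rw [← hn]; ring
  have h2 : (-(j : ℂ)) / 2 ^ k = n :=
    mul_right_cancel₀ (by simp [hπ, Complex.I_ne_zero]) h1
  have h3 : (-(j : ℂ)) = n * 2 ^ k := (div_eq_iff h2k).mp h2
  have h4 : -(j : ℤ) = n * 2 ^ k := by exact_mod_cast h3
  have h5 : (2 : ℤ) ^ k = 2 * 2 ^ (k - 1) := by
    rw [← pow_succ']; congr 1; omega
  have h6 : (j : ℤ) = 2 * (-n * 2 ^ (k - 1)) := by rw [h5] at h4; linarith
  omega
open Real Finset

theorem stmt8 (r j : ℕ) (hr : 2 ≤ r) (hj : j % 2 = 1) (hj1 : 1 ≤ j) (hj2 : j ≤ 2 ^ r - 1) :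
    (∑ q ∈ Finset.range (2 ^ r),
        (if q % 2 = 1 then
          (if 2 ^ (r - 1) + 1 ≤ q then (-1 : ℂ) else 1) *
            Complex.exp (-2 * (π : ℂ) * Complex.I * (j : ℂ) / 2 ^ r) ^ q
        else 0)) =
      -2 * Complex.I / (Real.sin (2 * π * j / 2 ^ r) : ℂ) ∧
    (∑ q ∈ Finset.range (2 ^ r),
        (if q % 2 = 1 then
          (if 2 ^ (r - 1) + 1 ≤ q then (-1 : ℂ) else 1) *
            (Complex.I⁻¹ * Complex.exp (-2 * (π : ℂ) * Complex.I * (j : ℂ) / 2 ^ r)) ^ q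
        else 0)) =
      -2 * Complex.I / (Real.cos (2 * π * j / 2 ^ r) : ℂ) := by
  set θ : ℝ := 2 * π * j / 2 ^ r with hθ
  set z : ℂ := Complex.exp (-2 * (π : ℂ) * Complex.I * (j : ℂ) / 2 ^ r) with hzdef
  have hπ : (π : ℂ) ≠ 0 := by exact_mod_cast Real.pi_ne_zero
  have hzne : z ≠ 0 := Complex.exp_ne_zero _
  have hc2r : (2 : ℂ) ^ r = 2 ^ (r - 1) * 2 := by rw [← pow_succ]; congr 1; omega
  have hn2r : (2 : ℕ) ^ r = 2 ^ (r - 1) + 2 ^ (r - 1) := by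
    rw [← two_mul, ← pow_succ']; congr 1; omega
  have hnM : (2 : ℕ) ^ (r - 1) = 2 * 2 ^ (r - 2) := by rw [← pow_succ']; congr 1; omega
  have hMe : (2 : ℕ) ^ (r - 1) % 2 = 0 := by omega
  have h2c : ((2 : ℂ)) ^ (r - 1) ≠ 0 := pow_ne_zero _ two_ne_zero
  have hzsq : z ^ 2 = Complex.exp (-2 * (π : ℂ) * Complex.I * (j : ℂ) / 2 ^ (r - 1)) := by
    rw [hzdef, ← Complex.exp_nat_mul]
    congr 1
    push_cast
    rw [hc2r]
    field_simp
  have hz2ne : z ^ 2 - 1 ≠ 0 := sub_ne_zero.mpr (by rw [hzsq]; exact exp_ne_one j (r - 1) hj (by omega))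
  have hzM : z ^ (2 ^ (r - 1)) = -1 := by
    rw [hzdef, ← Complex.exp_nat_mul]
    have e1 : ((2 ^ (r - 1) : ℕ) : ℂ) * (-2 * (π : ℂ) * Complex.I * (j : ℂ) / 2 ^ r)
        = (j : ℂ) * (-((π : ℂ) * Complex.I)) := by
      push_cast
      rw [hc2r]
      field_simp
    rw [e1, Complex.exp_nat_mul, Complex.exp_neg, Complex.exp_pi_mul_I]
    rw [show ((-1 : ℂ))⁻¹ = -1 by norm_num]
    exact Odd.neg_one_pow (Nat.odd_iff.mpr hj)
  have hzexp : Complex.exp (-(θ : ℂ) * Complex.I) = z := by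
    rw [hzdef]; congr 1; rw [hθ]; push_cast; ring
  have hzexp' : Complex.exp ((θ : ℂ) * Complex.I) = z⁻¹ := by
    rw [hzdef, ← Complex.exp_neg]; congr 1; rw [hθ]; push_cast; ring
  have e1 := Complex.exp_mul_I (θ : ℂ)
  have e2 := Complex.exp_mul_I (-(θ : ℂ))
  rw [hzexp'] at e1
  rw [Complex.cos_neg, Complex.sin_neg, hzexp] at e2
  have hsin : (Real.sin θ : ℂ) * (2 * Complex.I) = z⁻¹ - z := by
    rw [Complex.ofReal_sin]; linear_combination e2 - e1
  have hcos : (Real.cos θ : ℂ) * 2 = z⁻¹ + z := by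
    rw [Complex.ofReal_cos]; linear_combination -e1 - e2
  have hsum : ∀ w : ℂ, w ^ 2 - 1 ≠ 0 →
      ∑ q ∈ Finset.range (2 ^ r),
        (if q % 2 = 1 then (if 2 ^ (r - 1) + 1 ≤ q then (-1 : ℂ) else 1) * w ^ q else 0)
      = (1 - w ^ (2 ^ (r - 1))) * (w * (w ^ (2 ^ (r - 1)) - 1) / (w ^ 2 - 1)) := by
    intro w hw
    have hpow : (w ^ 2) ^ (2 ^ (r - 2)) = w ^ (2 ^ (r - 1)) := by
      rw [← pow_mul]; congr 1; omega
    rw [hn2r, split_sum _ hMe w, ← hpow, hnM, odd_geom _ _ hw]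
  constructor
  · have h1 := hsum z hz2ne
    rw [h1, hzM]
    have hsne : (Real.sin θ : ℂ) ≠ 0 := by
      intro h0
      rw [h0, zero_mul] at hsin
      apply hz2ne
      have h2 : z * z⁻¹ = z * z := by rw [← sub_eq_zero]; linear_combination -z * hsin
      rw [mul_inv_cancel₀ hzne] at h2
      linear_combination -h2
    rw [eq_div_iff hsne]
    have hs2 : (Real.sin θ : ℂ) = (z⁻¹ - z) / (2 * Complex.I) := by
      rw [eq_div_iff (by simp [Complex.I_ne_zero] : (2 * Complex.I : ℂ) ≠ 0)]
      exact hsin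
    rw [hs2]
    field_simp
    linear_combination (4 * z ^ 2 - 4) * Complex.I_sq
  · rcases Nat.lt_or_ge r 3 with hr3 | hr3
    · -- r = 2
      have hre : r = 2 := by omega
      subst hre
      norm_num at hzM
      have hcos0 : Real.cos θ = 0 := by
        rw [Real.cos_eq_zero_iff]
        refine ⟨((j / 2 : ℕ) : ℤ), ?_⟩
        have hjj : 2 * ((j / 2 : ℕ) : ℝ) + 1 = (j : ℝ) := by
          have h : 2 * (j / 2) + 1 = j := by omega
          exact_mod_cast h
        rw [hθ]
        have hc : ((((j / 2 : ℕ) : ℤ)) : ℝ) = ((j / 2 : ℕ) : ℝ) := Int.cast_natCast _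
        rw [hc, ← hjj]
        ring
      rw [hcos0, Complex.ofReal_zero, div_zero]
      rw [show (2 : ℕ) ^ 2 = 4 from rfl]
      rw [Finset.sum_range_succ, Finset.sum_range_succ, Finset.sum_range_succ,
        Finset.sum_range_succ, Finset.sum_range_zero]
      norm_num [Complex.inv_I]
      linear_combination Complex.I * z ^ 3 * Complex.I_sq - Complex.I * z * hzM
    · -- r ≥ 3
      have h2c2 : ((2 : ℂ)) ^ (r - 2) ≠ 0 := pow_ne_zero _ two_ne_zero
      have hc4r : (2 : ℂ) ^ r = 2 ^ (r - 2) * 2 * 2 := by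
        rw [← pow_succ, ← pow_succ]; congr 1; omega
      have hz4 : z ^ 4 = Complex.exp (-2 * (π : ℂ) * Complex.I * (j : ℂ) / 2 ^ (r - 2)) := by
        rw [hzdef, ← Complex.exp_nat_mul]
        congr 1
        push_cast
        rw [hc4r]
        field_simp
        ring
      have hz4ne : z ^ 4 - 1 ≠ 0 :=
        sub_ne_zero.mpr (by rw [hz4]; exact exp_ne_one j (r - 2) hj (by omega))
      have hz2p1 : z ^ 2 + 1 ≠ 0 := fun h => hz4ne (by linear_combination (z ^ 2 - 1) * h)
      have hwne : ((-Complex.I) * z) ^ 2 - 1 ≠ 0 := by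
        rw [mul_pow, neg_sq, Complex.I_sq]
        intro h; apply hz2p1; linear_combination -h
      have hwne' : (Complex.I⁻¹ * z) ^ 2 - 1 ≠ 0 := by rw [Complex.inv_I]; exact hwne
      have h4M : (2 : ℕ) ^ (r - 1) = 4 * 2 ^ (r - 3) := by
        rw [show (4 : ℕ) = 2 ^ 2 from rfl, ← pow_add]; congr 1; omega
      have hi4 : (Complex.I⁻¹) ^ (2 ^ (r - 1)) = 1 := by
        rw [h4M, pow_mul,
          show (Complex.I⁻¹) ^ 4 = 1 from by
            rw [Complex.inv_I, show ((-Complex.I) : ℂ) ^ 4 = (Complex.I ^ 2) ^ 2 from by ring,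
              Complex.I_sq]; norm_num,
          one_pow]
      have hwM : (Complex.I⁻¹ * z) ^ (2 ^ (r - 1)) = -1 := by
        rw [mul_pow, hi4, hzM, one_mul]
      have h2 := hsum (Complex.I⁻¹ * z) hwne'
      rw [h2, hwM]
      have hcne : (Real.cos θ : ℂ) ≠ 0 := by
        intro h0
        rw [h0, zero_mul] at hcos
        apply hz2p1
        have h4 : z * z⁻¹ + z * z = 0 := by linear_combination -z * hcos
        rw [mul_inv_cancel₀ hzne] at h4
        linear_combination h4
      rw [eq_div_iff hcne]
      have hc2' : (Real.cos θ : ℂ) = (z⁻¹ + z) / 2 := by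
        rw [eq_div_iff (two_ne_zero)]
        exact hcos
      rw [hc2', Complex.inv_I,
        show ((-Complex.I) * z) ^ 2 - 1 = -(z ^ 2 + 1) from by
          rw [mul_pow, neg_sq, Complex.I_sq]; ring]
      have hne : -(z ^ 2 + 1) ≠ 0 := neg_ne_zero.mpr hz2p1
      have hc0 : (-(z * 2) - z ^ 3 * 2 : ℂ) ≠ 0 := by
        intro h
        have h2 : z * (z ^ 2 + 1) = 0 := by linear_combination (-1 / 2 : ℂ) * h
        rcases mul_eq_zero.mp h2 with h3 | h3
        · exact hzne h3
        · exact hz2p1 h3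
      field_simp [hzne, hne]
      have hcc : (-(z * 2) - z ^ 3 * 2 : ℂ) * (-(z * 2) - z ^ 3 * 2)⁻¹ = 1 :=
        mul_inv_cancel₀ hc0
      ring
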